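/- (Channel Coding Theorem with GRAND, beyond capacity.) If the code-book rate exceeds capacity, R > 1 − H, then lim_{n→∞} (1/n) log P(U^n ≤ G_n) = 0, so the probability of an erroneous decoding does not decay exponentially in n, while lim_{n→∞} (1/n) log P(U^n ≥ G_n) = −I^N(1−R) < 0, so the probability that the decoding produced by GRAND is the transmitted code-word decays exponentially in the block length n with success exponent s(R) = I^N(1−R). -/

import Mathlib

open MeasureTheory ProbabilityTheory Filter Set Topology
open scoped ENNReal

/-- `(1/n)·log_q` of a sequence of probabilities (or expectations), valued in the
extended reals so that `log 0 = ⊥`. -/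
noncomputable def rateSeq (q : ℕ) (p : ℕ → ℝ≥0∞) (n : ℕ) : EReal :=
  ((((n : ℝ) * Real.log q)⁻¹ : ℝ) : EReal) * ENNReal.log (p n)


-- (N-k)/N as ENNReal = ofReal
lemma enn_frac_eq (N k : ℕ) (hN : 0 < N) :
    (((N - k : ℕ) : ℝ≥0∞) / N) = ENNReal.ofReal (((N - k : ℕ) : ℝ) / N) := by
  rw [ENNReal.ofReal_div_of_pos (by exact_mod_cast hN)]
  simp [ENNReal.ofReal_natCast]

lemma pow_tail_upper {N k m : ℕ} (hN : 0 < N) (hk : k ≤ N) :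
    ((((N - k : ℕ) : ℝ≥0∞)) / N) ^ m ≤ ENNReal.ofReal (Real.exp (-((m : ℝ) * k / N))) := by
  rw [enn_frac_eq N k hN, ← ENNReal.ofReal_pow (by positivity)]
  apply ENNReal.ofReal_le_ofReal
  have hNpos : (0:ℝ) < N := by exact_mod_cast hN
  have h1 : ((N - k : ℕ) : ℝ) / N ≤ Real.exp (-(k / N : ℝ)) := by
    have heq : ((N - k : ℕ) : ℝ) / N = 1 + (-(k/N : ℝ)) := by
      rw [Nat.cast_sub hk]; field_simp; ring
    rw [heq]
    have := Real.add_one_le_exp (-(k/N : ℝ)); linarith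
  calc (((N - k : ℕ) : ℝ) / N) ^ m ≤ (Real.exp (-(k / N : ℝ))) ^ m := by
        apply pow_le_pow_left₀ (by positivity) h1
    _ = Real.exp (-((m:ℝ) * k / N)) := by
        rw [← Real.exp_nat_mul]; ring_nf

lemma pow_tail_lower {N k m : ℕ} (hN : 0 < N) (h2 : 2 * k ≤ N) :
    ENNReal.ofReal (Real.exp (-(2 * (m : ℝ) * k / N))) ≤ ((((N - k : ℕ) : ℝ≥0∞)) / N) ^ m := by
  rw [enn_frac_eq N k hN, ← ENNReal.ofReal_pow (by positivity)]
  apply ENNReal.ofReal_le_ofReal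
  have hNpos : (0:ℝ) < N := by exact_mod_cast hN
  have hkN : (k : ℝ) / N ≤ 1/2 := by
    rw [div_le_iff₀ hNpos]
    have : (2 * k : ℕ) ≤ N := h2
    have := (Nat.cast_le (α := ℝ)).mpr this
    push_cast at this ⊢; linarith
  have hkn0 : (0:ℝ) ≤ (k:ℝ)/N := by positivity
  have h1 : Real.exp (-(2 * ((k:ℝ) / N))) ≤ ((N - k : ℕ) : ℝ) / N := by
    have he : 1 + 2 * ((k:ℝ)/N) ≤ Real.exp (2 * ((k:ℝ)/N)) := by
      have := Real.add_one_le_exp (2 * ((k:ℝ)/N)); linarith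
    have hpos : (0:ℝ) < 1 + 2 * ((k:ℝ)/N) := by linarith
    have hstep : Real.exp (-(2 * ((k:ℝ)/N))) ≤ 1 / (1 + 2 * ((k:ℝ)/N)) := by
      rw [Real.exp_neg, ← one_div]
      exact one_div_le_one_div_of_le hpos he
    calc Real.exp (-(2 * ((k:ℝ)/N))) ≤ 1 / (1 + 2 * ((k:ℝ)/N)) := hstep
      _ ≤ 1 - (k:ℝ)/N := by
          rw [div_le_iff₀ hpos]
          nlinarith [hkN, hkn0]
      _ = ((N - k : ℕ) : ℝ) / N := by
          rw [Nat.cast_sub (by omega)]; field_simp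
  calc Real.exp (-(2 * (m:ℝ) * k / N)) = (Real.exp (-(2 * ((k:ℝ)/N)))) ^ m := by
        rw [← Real.exp_nat_mul]; ring_nf
    _ ≤ (((N - k : ℕ) : ℝ) / N) ^ m := pow_le_pow_left₀ (Real.exp_nonneg _) h1 m

lemma tail_single {Ω : Type*} [MeasurableSpace Ω] (μ : Measure Ω) {N : ℕ}
    (f : Ω → ℕ) (hmeas : Measurable f) (hval : ∀ ω, f ω ∈ Finset.Icc 1 N)
    (hunif : ∀ k ∈ Finset.Icc 1 N, μ {ω | f ω = k} = ((N : ℝ≥0∞))⁻¹) (k : ℕ) :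
    μ {ω | k < f ω} = ((N - k : ℕ) : ℝ≥0∞) / N := by
  have hset : {ω | k < f ω} = ⋃ j ∈ Finset.Ioc k N, {ω | f ω = j} := by
    ext ω
    simp only [Set.mem_setOf_eq, Set.mem_iUnion, Finset.mem_Ioc, exists_prop]
    constructor
    · intro h
      exact ⟨f ω, ⟨h, (Finset.mem_Icc.mp (hval ω)).2⟩, rfl⟩
    · rintro ⟨j, ⟨h1, _⟩, hj⟩
      omega
  rw [hset, measure_biUnion_finset]
  · have : ∀ j ∈ Finset.Ioc k N, μ {ω | f ω = j} = ((N : ℝ≥0∞))⁻¹ := by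
      intro j hj
      rw [Finset.mem_Ioc] at hj
      exact hunif j (Finset.mem_Icc.mpr ⟨by omega, hj.2⟩)
    rw [Finset.sum_congr rfl this, Finset.sum_const, Nat.card_Ioc, nsmul_eq_mul,
      div_eq_mul_inv]
  · intro i hi j hj hij
    simp only [Set.disjoint_left, Set.mem_setOf_eq]
    intro ω h1 h2
    exact hij (by omega)
  · intro j _
    exact hmeas (measurableSet_singleton j)

lemma tail_min {Ω : Type*} [MeasurableSpace Ω] (μ : Measure Ω) [IsProbabilityMeasure μ]
    {m N : ℕ} (f : Fin m → Ω → ℕ) (hmeas : ∀ i, Measurable (f i))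
    (hval : ∀ i ω, f i ω ∈ Finset.Icc 1 N)
    (hunif : ∀ i, ∀ k ∈ Finset.Icc 1 N, μ {ω | f i ω = k} = ((N : ℝ≥0∞))⁻¹)
    (hind : iIndepFun f μ) (k : ℕ) :
    μ {ω | ∀ i, k < f i ω} = (((N - k : ℕ) : ℝ≥0∞) / N) ^ m := by
  have hset : {ω | ∀ i, k < f i ω} = ⋂ i, {ω | k < f i ω} := by
    ext ω; simp
  have hprod := hind.meas_iInter (s := fun i => {ω | k < f i ω})
    (fun i => ⟨Set.Ioi k, (Set.to_countable _).measurableSet, rfl⟩)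
  rw [hset, hprod,
    Finset.prod_congr rfl (fun i _ => tail_single μ (f i) (hmeas i) (hval i) (hunif i) k)]
  simp [Finset.prod_const]


lemma ereal_le_of_forall_le_add {x : EReal} {y : ℝ}
    (h : ∀ ε : ℝ, 0 < ε → x ≤ ((y + ε : ℝ) : EReal)) : x ≤ (y : EReal) := by
  by_contra hc
  push_neg at hc
  obtain ⟨z, hz1, hz2⟩ := EReal.exists_between_coe_real hc
  have hε : (0:ℝ) < z - y := sub_pos.mpr (by exact_mod_cast hz1)
  have := h (z - y) hε
  rw [show y + (z - y) = z by ring] at this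
  exact absurd (this.trans_lt hz2) (lt_irrefl _)

lemma ereal_le_of_forall_sub_le {x : EReal} {y : ℝ}
    (h : ∀ ε : ℝ, 0 < ε → ((y - ε : ℝ) : EReal) ≤ x) : (y : EReal) ≤ x := by
  by_contra hc
  push_neg at hc
  obtain ⟨z, hz1, hz2⟩ := EReal.exists_between_coe_real hc
  have hε : (0:ℝ) < y - z := sub_pos.mpr (by exact_mod_cast hz2)
  have := h (y - z) hε
  rw [show y - (y - z) = z by ring] at this
  exact absurd (hz1.trans_le this) (lt_irrefl _)

lemma c_tendsto {q : ℕ} (hq : 2 ≤ q) :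
    Tendsto (fun n : ℕ => ((n : ℝ) * Real.log q)⁻¹) atTop (𝓝 0) := by
  have hlogq : 0 < Real.log q := Real.log_pos (by exact_mod_cast hq)
  exact (tendsto_natCast_atTop_atTop.atTop_mul_const hlogq).inv_tendsto_atTop

lemma liminf_rate_lower {q : ℕ} (hq : 2 ≤ q) {v w p : ℕ → ℝ≥0∞} {A C : ℝ} (hC : 0 < C)
    (hvw : ∀ᶠ n in atTop, v n * w n ≤ p n)
    (hv1 : ∀ n, v n ≤ 1)
    (hw : ∀ᶠ n in atTop, ENNReal.ofReal C ≤ w n)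
    (hliminf : (A : EReal) ≤ liminf (rateSeq q v) atTop) :
    (A : EReal) ≤ liminf (rateSeq q p) atTop := by
  have hlogq : 0 < Real.log q := Real.log_pos (by exact_mod_cast hq)
  apply ereal_le_of_forall_sub_le
  intro ε hε
  have h1 : ∀ᶠ n in atTop, ((A - ε/2 : ℝ) : EReal) < rateSeq q v n := by
    refine eventually_lt_of_lt_liminf (lt_of_lt_of_le ?_ hliminf) ?_
    · exact_mod_cast (by linarith : A - ε/2 < A)
    · isBoundedDefault
  have h2 : ∀ᶠ n : ℕ in atTop, -(ε/2) < ((n : ℝ) * Real.log q)⁻¹ * Real.log C := by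
    have := (c_tendsto hq).mul_const (Real.log C)
    rw [zero_mul] at this
    exact (tendsto_order.1 this).1 (-(ε/2)) (by linarith : -(ε/2) < (0:ℝ))
  have key : ∀ᶠ n in atTop, ((A - ε : ℝ) : EReal) ≤ rateSeq q p n := by
    filter_upwards [hvw, hw, h1, h2, eventually_ge_atTop 1] with n hvwn hwn h1n h2n hn
    set c : ℝ := ((n : ℝ) * Real.log q)⁻¹ with hc
    have hcpos : 0 < c := by
      apply inv_pos.mpr; positivity
    -- log v n is a real number
    have hvbot : ENNReal.log (v n) ≠ ⊥ := by
      intro hb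
      rw [rateSeq, ← hc, hb, EReal.coe_mul_bot_of_pos (by exact_mod_cast hcpos)] at h1n
      exact absurd h1n (by simp)
    have hvtop : ENNReal.log (v n) ≠ ⊤ := by
      intro ht
      have := ENNReal.log_le_zero_iff.mpr (hv1 n)
      rw [ht] at this
      exact absurd this (by simp)
    set xr : ℝ := (ENNReal.log (v n)).toReal with hxrdef
    have hxr : ENNReal.log (v n) = (xr : EReal) := (EReal.coe_toReal hvtop hvbot).symm
    have hcx : A - ε/2 < c * xr := by
      rw [rateSeq, ← hc, hxr, ← EReal.coe_mul, EReal.coe_lt_coe_iff] at h1n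
      exact h1n
    have hchain : ((c * (xr + Real.log C) : ℝ) : EReal) ≤ rateSeq q p n := by
      have s1 : ((xr + Real.log C : ℝ) : EReal) ≤ ENNReal.log (p n) := by
        calc ((xr + Real.log C : ℝ) : EReal) = (xr : EReal) + (Real.log C : EReal) :=
              EReal.coe_add _ _
          _ ≤ ENNReal.log (v n) + ENNReal.log (w n) := by
              apply add_le_add
              · rw [hxr]
              · rw [← ENNReal.log_ofReal_of_pos hC]
                exact ENNReal.log_monotone hwn
          _ = ENNReal.log (v n * w n) := (ENNReal.log_mul_add).symm
          _ ≤ ENNReal.log (p n) := ENNReal.log_monotone hvwn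
      calc ((c * (xr + Real.log C) : ℝ) : EReal)
          = (c : EReal) * ((xr + Real.log C : ℝ) : EReal) := EReal.coe_mul _ _
        _ ≤ (c : EReal) * ENNReal.log (p n) :=
            mul_le_mul_of_nonneg_left s1 (by exact_mod_cast hcpos.le)
        _ = rateSeq q p n := by rw [rateSeq, ← hc]
    refine le_trans ?_ hchain
    have : A - ε ≤ c * (xr + Real.log C) := by
      have : c * (xr + Real.log C) = c * xr + c * Real.log C := by ring
      rw [this]; linarith
    exact_mod_cast this
  exact le_liminf_of_le (by isBoundedDefault) key

lemma rate_step {c A e l2 : ℝ} (hc : 0 < c) {P L : EReal}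
    (hL : P ≤ (l2 : EReal) + L)
    (hLlt : (c : EReal) * L < ((A : ℝ) : EReal))
    (hl2 : c * l2 < e) :
    (c : EReal) * P ≤ ((A + e : ℝ) : EReal) := by
  induction L using EReal.rec with
  | bot =>
    rw [EReal.add_bot, le_bot_iff] at hL
    rw [hL, EReal.mul_bot_of_pos (by exact_mod_cast hc)]
    exact bot_le
  | top =>
    rw [EReal.mul_top_of_pos (by exact_mod_cast hc)] at hLlt
    exact absurd hLlt (by simp)
  | coe xr =>
    have hx : c * xr < A := by
      rw [← EReal.coe_mul, EReal.coe_lt_coe_iff] at hLlt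
      exact hLlt
    calc (c : EReal) * P ≤ (c : EReal) * ((l2 + xr : ℝ) : EReal) := by
          apply mul_le_mul_of_nonneg_left _ (by exact_mod_cast hc.le)
          rw [EReal.coe_add]
          exact hL
      _ = ((c * (l2 + xr) : ℝ) : EReal) := (EReal.coe_mul _ _).symm
      _ ≤ ((A + e : ℝ) : EReal) := by
          rw [EReal.coe_le_coe_iff]
          nlinarith
  
lemma limsup_rate_upper {q : ℕ} (hq : 2 ≤ q) {v w p : ℕ → ℝ≥0∞} {A : ℝ}
    (hp : ∀ᶠ n in atTop, p n ≤ v n + w n)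
    (hv : limsup (rateSeq q v) atTop ≤ (A : EReal))
    (hw : limsup (rateSeq q w) atTop ≤ (A : EReal)) :
    limsup (rateSeq q p) atTop ≤ (A : EReal) := by
  have hlogq : 0 < Real.log q := Real.log_pos (by exact_mod_cast hq)
  apply ereal_le_of_forall_le_add
  intro ε hε
  have h1 : ∀ᶠ n in atTop, rateSeq q v n < ((A + ε/2 : ℝ) : EReal) := by
    refine eventually_lt_of_limsup_lt (lt_of_le_of_lt hv ?_) ?_
    · exact_mod_cast (by linarith : A < A + ε/2)
    · isBoundedDefault
  have h2 : ∀ᶠ n in atTop, rateSeq q w n < ((A + ε/2 : ℝ) : EReal) := by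
    refine eventually_lt_of_limsup_lt (lt_of_le_of_lt hw ?_) ?_
    · exact_mod_cast (by linarith : A < A + ε/2)
    · isBoundedDefault
  have h3 : ∀ᶠ n : ℕ in atTop, ((n : ℝ) * Real.log q)⁻¹ * Real.log 2 < ε/2 := by
    have := (c_tendsto hq).mul_const (Real.log 2)
    rw [zero_mul] at this
    exact (tendsto_order.1 this).2 (ε/2) (by linarith : (0:ℝ) < ε/2)
  have key : ∀ᶠ n in atTop, rateSeq q p n ≤ ((A + ε : ℝ) : EReal) := by
    filter_upwards [hp, h1, h2, h3, eventually_ge_atTop 1] with n hpn h1n h2n h3n hn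
    set c : ℝ := ((n : ℝ) * Real.log q)⁻¹ with hc
    have hcpos : 0 < c := by apply inv_pos.mpr; positivity
    have hL : ENNReal.log (p n) ≤ ((Real.log 2 : ℝ) : EReal)
        + max (ENNReal.log (v n)) (ENNReal.log (w n)) := by
      calc ENNReal.log (p n) ≤ ENNReal.log (2 * max (v n) (w n)) := by
            apply ENNReal.log_monotone
            refine hpn.trans ?_
            rw [two_mul]
            exact add_le_add (le_max_left _ _) (le_max_right _ _)
        _ = ENNReal.log 2 + ENNReal.log (max (v n) (w n)) := ENNReal.log_mul_add
        _ = ((Real.log 2 : ℝ) : EReal) + max (ENNReal.log (v n)) (ENNReal.log (w n)) := by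
            rw [ENNReal.log_monotone.map_max]
            congr 1
            rw [show (2 : ℝ≥0∞) = ENNReal.ofReal (2:ℝ) by simp]
            exact ENNReal.log_ofReal_of_pos (by norm_num)
    have goal_eq : rateSeq q p n = (c : EReal) * ENNReal.log (p n) := by rw [rateSeq, ← hc]
    rw [goal_eq, show (A + ε : ℝ) = (A + ε/2) + ε/2 by ring]
    rcases max_cases (ENNReal.log (v n)) (ENNReal.log (w n)) with ⟨hmax, _⟩ | ⟨hmax, _⟩
    · rw [hmax] at hL
      exact rate_step hcpos hL (by rw [rateSeq, ← hc] at h1n; exact h1n) h3n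
    · rw [hmax] at hL
      exact rate_step hcpos hL (by rw [rateSeq, ← hc] at h2n; exact h2n) h3n
  exact limsup_le_of_le (by isBoundedDefault) key

lemma limsup_rate_bot {q : ℕ} (hq : 2 ≤ q) {w : ℕ → ℝ≥0∞} {e : ℕ → ℝ} (A : ℝ)
    (hbound : ∀ᶠ n in atTop, w n ≤ ENNReal.ofReal (Real.exp (-(e n))))
    (hgrow : Tendsto (fun n : ℕ => e n / ((n : ℝ) * Real.log q)) atTop atTop) :
    limsup (rateSeq q w) atTop ≤ (A : EReal) := by
  have hlogq : 0 < Real.log q := Real.log_pos (by exact_mod_cast hq)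
  apply limsup_le_of_le (by isBoundedDefault)
  filter_upwards [hbound, hgrow.eventually_ge_atTop (-A), eventually_ge_atTop 1]
    with n hb hg hn
  set c : ℝ := ((n : ℝ) * Real.log q)⁻¹ with hc
  have hcpos : 0 < c := by apply inv_pos.mpr; positivity
  have h1 : ENNReal.log (w n) ≤ ((-(e n) : ℝ) : EReal) := by
    calc ENNReal.log (w n) ≤ ENNReal.log (ENNReal.ofReal (Real.exp (-(e n)))) :=
          ENNReal.log_monotone hb
      _ = ((-(e n) : ℝ) : EReal) := by
          rw [ENNReal.log_ofReal_of_pos (Real.exp_pos _), Real.log_exp]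
  calc rateSeq q w n = (c : EReal) * ENNReal.log (w n) := by rw [rateSeq, ← hc]
    _ ≤ (c : EReal) * ((-(e n) : ℝ) : EReal) :=
        mul_le_mul_of_nonneg_left h1 (by exact_mod_cast hcpos.le)
    _ = ((c * (-(e n)) : ℝ) : EReal) := (EReal.coe_mul _ _).symm
    _ ≤ (A : EReal) := by
        rw [EReal.coe_le_coe_iff]
        have : c * (-(e n)) = -(e n / ((n : ℝ) * Real.log q)) := by
          rw [hc]; field_simp
        rw [this]
        linarith

lemma rpow_linear_atTop {q : ℕ} (hq : 2 ≤ q) {s : ℝ} (hs : 0 < s) :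
    Tendsto (fun n : ℕ => (q:ℝ) ^ ((n:ℝ) * s)) atTop atTop := by
  have hq0 : (0:ℝ) < q := by positivity
  have hlogq : 0 < Real.log q := Real.log_pos (by exact_mod_cast hq)
  have h2 : Tendsto (fun n : ℕ => (n:ℝ) * (s * Real.log q)) atTop atTop :=
    tendsto_natCast_atTop_atTop.atTop_mul_const (by positivity)
  have h3 := Real.tendsto_exp_atTop.comp h2
  apply h3.congr
  intro n
  simp only [Function.comp_apply]
  rw [Real.rpow_def_of_pos hq0]
  ring_nf

lemma exp_div_linear_atTop {q : ℕ} (hq : 2 ≤ q) {δ : ℝ} (hδ : 0 < δ) :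
    Tendsto (fun n : ℕ => ((q:ℝ) ^ ((n:ℝ) * δ) / 4) / ((n:ℝ) * Real.log q)) atTop atTop := by
  have hq0 : (0:ℝ) < q := by positivity
  have hlogq : 0 < Real.log q := Real.log_pos (by exact_mod_cast hq)
  have h1 : Tendsto (fun x : ℝ => Real.exp x / x) atTop atTop := by
    have := Real.tendsto_exp_div_pow_atTop 1
    simpa using this
  have h2 : Tendsto (fun n : ℕ => (n:ℝ) * (δ * Real.log q)) atTop atTop :=
    tendsto_natCast_atTop_atTop.atTop_mul_const (by positivity)
  have h3 := (h1.comp h2).atTop_mul_const (show (0:ℝ) < δ/4 by positivity)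
  apply h3.congr'
  filter_upwards [eventually_ge_atTop 1] with n hn
  have hn0 : (0:ℝ) < n := by exact_mod_cast hn
  simp only [Function.comp_apply]
  rw [Real.rpow_def_of_pos hq0]
  have : Real.log q * ((n:ℝ) * δ) = (n:ℝ) * (δ * Real.log q) := by ring
  rw [this]
  field_simp

set_option maxHeartbeats 4000000 in
/-- Channel Coding Theorem with GRAND, beyond capacity: if
`R > 1 - H` then the error probability does not decay exponentially, while the
success probability decays exponentially with exponent `s(R) = I^N(1-R) > 0`. -/
theorem grand_channel_coding_beyond_capacity
    {Ω : Type*} [MeasurableSpace Ω] (μ : Measure Ω) [IsProbabilityMeasure μ]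
    (q : ℕ) (hq : 2 ≤ q) (R : ℝ) (hR : R ∈ Set.Ioo (0:ℝ) 1)
    (M : ℕ → ℕ) (hM : ∀ n : ℕ, M n = ⌊(q : ℝ) ^ ((n : ℝ) * R)⌋₊)
    (Un : (n : ℕ) → Fin (M n) → Ω → ℕ)
    (hUnmeas : ∀ n i, Measurable (Un n i))
    (hUnval : ∀ n i ω, Un n i ω ∈ Finset.Icc 1 (q ^ n))
    (hUnunif : ∀ n i, ∀ k ∈ Finset.Icc 1 (q ^ n), μ {ω | Un n i ω = k} = ((q : ℝ≥0∞) ^ n)⁻¹)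
    (hUnindep : ∀ n, iIndepFun (Un n) μ)
    (U : ℕ → Ω → ℕ) (hU : ∀ n ω, U n ω = ⨅ i, Un n i ω)
    (G : ℕ → Ω → ℕ) (hGmeas : ∀ n, Measurable (G n))
    (hGval : ∀ n ω, G n ω ∈ Finset.Icc 1 (q ^ n))
    (hGindep : ∀ n, IndepFun (G n) (fun ω i => Un n i ω) μ)
    (IN : ℝ → EReal) (H : ℝ) (hH : H ∈ Set.Ioo (0:ℝ) 1)
    (hINnn : ∀ x ∈ Set.Icc (0:ℝ) 1, 0 ≤ IN x)
    (hINconv : ∀ x ∈ Set.Icc (0:ℝ) 1, ∀ y ∈ Set.Icc (0:ℝ) 1, ∀ a b : ℝ,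
      0 ≤ a → 0 ≤ b → a + b = 1 →
      IN (a * x + b * y) ≤ (a : EReal) * IN x + (b : EReal) * IN y)
    (hINlsc : LowerSemicontinuousOn IN (Set.Icc 0 1))
    (hINcont : ContinuousOn IN {x | x ∈ Set.Icc (0:ℝ) 1 ∧ IN x ≠ ⊤})
    (hINzero : ∀ x ∈ Set.Icc (0:ℝ) 1, (IN x = 0 ↔ x = H))
    (hIN0 : IN 0 ≤ (H : EReal))
    (hLDlow : ∀ O : Set ℝ, IsOpen O →
      -(⨅ x ∈ O ∩ Set.Icc (0:ℝ) 1, IN x) ≤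
        Filter.liminf
          (rateSeq q (fun n => μ {ω | (n : ℝ)⁻¹ * Real.logb q ((G n ω : ℝ)) ∈ O}))
          Filter.atTop)
    (hLDup : ∀ F : Set ℝ, IsClosed F →
      Filter.limsup
          (rateSeq q (fun n => μ {ω | (n : ℝ)⁻¹ * Real.logb q ((G n ω : ℝ)) ∈ F}))
          Filter.atTop ≤
        -(⨅ x ∈ F ∩ Set.Icc (0:ℝ) 1, IN x))
    (hcap : 1 - H < R) :
    Filter.Tendsto
      (rateSeq q (fun n => μ {ω | U n ω ≤ G n ω}))
      Filter.atTop (nhds (0 : EReal)) ∧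
    Filter.Tendsto
      (rateSeq q (fun n => μ {ω | G n ω ≤ U n ω}))
      Filter.atTop (nhds (-(IN (1 - R)))) ∧
    -(IN (1 - R)) < 0 := by
  obtain ⟨hR0, hR1⟩ := hR
  obtain ⟨hH0, hH1⟩ := hH
  have hq1 : (1:ℝ) < q := by exact_mod_cast hq
  have hq0 : (0:ℝ) < q := by positivity
  have hlogq : 0 < Real.log q := Real.log_pos hq1
  set β : ℝ := 1 - R with hβdef
  have hβ0 : 0 < β := by simp only [hβdef]; linarith
  have hβH : β < H := by simp only [hβdef]; linarith
  have hβ1 : β < 1 := by simp only [hβdef]; linarith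
  have hβmem : β ∈ Set.Icc (0:ℝ) 1 := ⟨hβ0.le, hβ1.le⟩
  -- basic facts about M and q^n
  have hM1 : ∀ n, 1 ≤ M n := by
    intro n
    rw [hM n]
    apply Nat.le_floor
    rw [Nat.cast_one]
    calc (1:ℝ) = (q:ℝ) ^ (0:ℝ) := (Real.rpow_zero _).symm
      _ ≤ _ := Real.rpow_le_rpow_of_exponent_le hq1.le (by positivity)
  have hMle : ∀ n, (M n : ℝ) ≤ (q:ℝ) ^ ((n:ℝ) * R) := by
    intro n
    rw [hM n]
    exact Nat.floor_le (by positivity)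
  have hNpos : ∀ n : ℕ, 0 < q ^ n := fun n => pow_pos (by omega) n
  have hNr : ∀ n : ℕ, ((q ^ n : ℕ) : ℝ) = (q:ℝ) ^ ((n:ℝ) : ℝ) := by
    intro n
    push_cast
    rw [← Real.rpow_natCast]
  -- tail measure of the minimum
  have tailU : ∀ n k : ℕ, μ {ω | ∀ i, k < Un n i ω}
      = ((((q ^ n - k : ℕ) : ℝ≥0∞)) / ((q ^ n : ℕ) : ℝ≥0∞)) ^ (M n) := by
    intro n k
    apply tail_min μ (Un n) (hUnmeas n) (hUnval n) _ (hUnindep n) k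
    intro i j hj
    rw [hUnunif n i j hj]
    congr 1
    push_cast
    ring
  -- measurability of the "min tail" event
  have hTailMeas : ∀ n k : ℕ, MeasurableSet {ω | ∀ i, k < Un n i ω} := by
    intro n k
    have : {ω | ∀ i, k < Un n i ω} = ⋂ i, (Un n i) ⁻¹' (Set.Ioi k) := by
      ext ω; simp
    rw [this]
    exact MeasurableSet.iInter fun i => hUnmeas n i ((Set.to_countable _).measurableSet)
  -- independence of G-events and Un-events
  have hSmeas : ∀ (n k : ℕ), MeasurableSet {v : Fin (M n) → ℕ | ∀ i, k < v i} := by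
    intro n k
    have : {v : Fin (M n) → ℕ | ∀ i, k < v i}
        = ⋂ i, (fun v : Fin (M n) → ℕ => v i) ⁻¹' (Set.Ioi k) := by
      ext v; simp
    rw [this]
    exact MeasurableSet.iInter fun i => (measurable_pi_apply i) ((Set.to_countable _).measurableSet)
  have keyInter : ∀ (n : ℕ) (T : Set ℕ) (k : ℕ),
      μ ({ω | G n ω ∈ T} ∩ {ω | ∀ i, k < Un n i ω})
        = μ {ω | G n ω ∈ T} * μ {ω | ∀ i, k < Un n i ω} := by
    intro n T k
    exact (indepFun_iff_measure_inter_preimage_eq_mul.mp (hGindep n)) T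
      {v | ∀ i, k < v i} ((Set.to_countable T).measurableSet) (hSmeas n k)
  have keyInterC : ∀ (n : ℕ) (T : Set ℕ) (k : ℕ),
      μ ({ω | G n ω ∈ T} ∩ {ω | ¬ ∀ i, k < Un n i ω})
        = μ {ω | G n ω ∈ T} * μ {ω | ¬ ∀ i, k < Un n i ω} := by
    intro n T k
    exact (indepFun_iff_measure_inter_preimage_eq_mul.mp (hGindep n)) T
      {v | ∀ i, k < v i}ᶜ ((Set.to_countable T).measurableSet) (hSmeas n k).compl
  -- IN is finite on [0, H]
  have hINH : IN H = 0 := (hINzero H ⟨hH0.le, hH1.le⟩).mpr rfl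
  have hfin : ∀ x ∈ Set.Icc (0:ℝ) H, IN x ≠ ⊤ := by
    intro x hx
    obtain ⟨hx0, hxH⟩ := hx
    have hx1 : x ≤ 1 := hxH.trans hH1.le
    have hb0 : 0 ≤ x / H := by positivity
    have hb1 : x / H ≤ 1 := by
      rw [div_le_one hH0]; exact hxH
    have hconv := hINconv 0 ⟨le_refl _, by linarith⟩ H ⟨hH0.le, hH1.le⟩
      (1 - x/H) (x/H) (by linarith) hb0 (by ring)
    rw [mul_zero, zero_add, div_mul_cancel₀ x hH0.ne', hINH, mul_zero, add_zero] at hconv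
    have hIN0top : IN 0 ≠ ⊤ := (lt_of_le_of_lt hIN0 (EReal.coe_lt_top H)).ne
    have hIN0bot : IN 0 ≠ ⊥ := by
      intro hb
      have := hINnn 0 ⟨le_refl _, by norm_num⟩
      rw [hb] at this
      exact absurd this (by simp)
    set r : ℝ := (IN 0).toReal with hrdef
    have hr : IN 0 = (r : EReal) := (EReal.coe_toReal hIN0top hIN0bot).symm
    rw [hr, ← EReal.coe_mul] at hconv
    exact (lt_of_le_of_lt hconv (EReal.coe_lt_top _)).ne
  -- IN is nonincreasing on [0, H]
  have hmono : ∀ x y : ℝ, 0 ≤ x → x ≤ y → y ≤ H → IN y ≤ IN x := by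
    intro x y hx0 hxy hyH
    rcases eq_or_lt_of_le hxy with rfl | hlt
    · exact le_refl _
    have hxH : x < H := lt_of_lt_of_le hlt hyH
    have hd : 0 < H - x := by linarith
    have hx1 : x ≤ 1 := by linarith
    have hy1 : y ≤ 1 := by linarith
    have hy0 : 0 ≤ y := by linarith
    have ha0 : 0 ≤ (H - y)/(H - x) := by
      apply div_nonneg (by linarith) hd.le
    have hb0 : 0 ≤ (y - x)/(H - x) := by
      apply div_nonneg (by linarith) hd.le
    have hab : (H - y)/(H - x) + (y - x)/(H - x) = 1 := by
      field_simp
      ring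
    have hxy' : (H - y)/(H - x) * x + (y - x)/(H - x) * H = y := by
      field_simp
      ring
    have hconv := hINconv x ⟨hx0, hx1⟩ H ⟨hH0.le, hH1.le⟩
      ((H - y)/(H - x)) ((y - x)/(H - x)) ha0 hb0 hab
    rw [hxy', hINH, mul_zero, add_zero] at hconv
    rcases eq_or_ne (IN x) ⊤ with htop | htop
    · rw [htop]; exact le_top
    have hbotIN : IN x ≠ ⊥ := by
      intro hb
      have := hINnn x ⟨hx0, hx1⟩
      rw [hb] at this
      exact absurd this (by simp)
    set r : ℝ := (IN x).toReal with hrdef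
    have hr : IN x = (r : EReal) := (EReal.coe_toReal htop hbotIN).symm
    have hr0 : 0 ≤ r := by
      have := hINnn x ⟨hx0, hx1⟩
      rw [hr] at this
      exact_mod_cast this
    rw [hr, ← EReal.coe_mul] at hconv
    refine hconv.trans ?_
    rw [hr, EReal.coe_le_coe_iff]
    have ha1 : (H - y)/(H - x) ≤ 1 := by
      rw [div_le_one hd]; linarith
    nlinarith
  -- IN β is a (finite, positive) real number
  have hINβtop : IN β ≠ ⊤ := hfin β ⟨hβ0.le, hβH.le⟩
  have hINβbot : IN β ≠ ⊥ := by
    intro hb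
    have := hINnn β hβmem
    rw [hb] at this
    exact absurd this (by simp)
  set Aβ : ℝ := (IN β).toReal with hAβdef
  have hAβ : IN β = ((Aβ : ℝ) : EReal) := (EReal.coe_toReal hINβtop hINβbot).symm
  have hINβpos : 0 < IN β := by
    refine lt_of_le_of_ne (hINnn β hβmem) ?_
    intro h0
    exact absurd ((hINzero β hβmem).mp h0.symm) hβH.ne
  -- PART 3
  have part3 : -(IN (1 - R)) < 0 := by
    rw [show (1 - R) = β from rfl, ← neg_zero]
    exact EReal.neg_lt_neg_iff.mpr hINβpos
  -- continuity of IN at β within the finiteness domain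
  have hβD : β ∈ {x : ℝ | x ∈ Set.Icc (0:ℝ) 1 ∧ IN x ≠ ⊤} := ⟨hβmem, hINβtop⟩
  have hcontβ : ContinuousWithinAt IN {x : ℝ | x ∈ Set.Icc (0:ℝ) 1 ∧ IN x ≠ ⊤} β :=
    hINcont β hβD
  -- translation between log-scale events and floor thresholds
  have hGpos : ∀ n ω, (0:ℝ) < ((G n ω : ℕ) : ℝ) := by
    intro n ω
    exact_mod_cast (Finset.mem_Icc.mp (hGval n ω)).1
  have T1 : ∀ (n : ℕ), 1 ≤ n → ∀ (s : ℝ) (ω : Ω),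
      (n:ℝ)⁻¹ * Real.logb q ((G n ω : ℕ) : ℝ) < s → G n ω ≤ ⌊(q:ℝ) ^ ((n:ℝ) * s)⌋₊ := by
    intro n hn s ω h
    have hn0 : (0:ℝ) < n := by exact_mod_cast hn
    have hlog : Real.logb q ((G n ω : ℕ) : ℝ) < (n:ℝ) * s := (inv_mul_lt_iff₀ hn0).mp h
    have hG : ((G n ω : ℕ) : ℝ) < (q:ℝ) ^ ((n:ℝ) * s) :=
      (Real.logb_lt_iff_lt_rpow hq1 (hGpos n ω)).mp hlog
    exact Nat.le_floor hG.le
  have T2 : ∀ (n : ℕ), 1 ≤ n → ∀ (s : ℝ) (ω : Ω),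
      s < (n:ℝ)⁻¹ * Real.logb q ((G n ω : ℕ) : ℝ) → ⌊(q:ℝ) ^ ((n:ℝ) * s)⌋₊ < G n ω := by
    intro n hn s ω h
    have hn0 : (0:ℝ) < n := by exact_mod_cast hn
    have hlog : (n:ℝ) * s < Real.logb q ((G n ω : ℕ) : ℝ) := (lt_inv_mul_iff₀ hn0).mp h
    have hG : (q:ℝ) ^ ((n:ℝ) * s) < ((G n ω : ℕ) : ℝ) :=
      (Real.lt_logb_iff_rpow_lt hq1 (hGpos n ω)).mp hlog
    have : (⌊(q:ℝ) ^ ((n:ℝ) * s)⌋₊ : ℝ) < ((G n ω : ℕ) : ℝ) :=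
      lt_of_le_of_lt (Nat.floor_le (by positivity)) hG
    exact_mod_cast this
  have hK1 : ∀ (s : ℝ), 0 ≤ s → ∀ n : ℕ, 1 ≤ ⌊(q:ℝ) ^ ((n:ℝ) * s)⌋₊ := by
    intro s hs n
    apply Nat.le_floor
    rw [Nat.cast_one]
    calc (1:ℝ) = (q:ℝ) ^ (0:ℝ) := (Real.rpow_zero _).symm
      _ ≤ _ := Real.rpow_le_rpow_of_exponent_le hq1.le (by positivity)
  have hKle : ∀ (s : ℝ), s ≤ 1 → ∀ n : ℕ, ⌊(q:ℝ) ^ ((n:ℝ) * s)⌋₊ ≤ q ^ n := by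
    intro s hs n
    have h1 : (⌊(q:ℝ) ^ ((n:ℝ) * s)⌋₊ : ℝ) ≤ (q:ℝ) ^ ((n:ℝ) * s) := Nat.floor_le (by positivity)
    have h2 : (q:ℝ) ^ ((n:ℝ) * s) ≤ (q:ℝ) ^ ((n:ℝ) : ℝ) := by
      apply Real.rpow_le_rpow_of_exponent_le hq1.le
      nlinarith [Nat.cast_nonneg (α := ℝ) n]
    have := (h1.trans h2).trans (le_of_eq (hNr n).symm)
    exact_mod_cast this
  -- joint lower bound on M n * floor(q^{ns}) / q^n
  have hMKbig : ∀ s : ℝ, 0 < s → s ≤ 1 → ∀ᶠ n : ℕ in atTop,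
      (q:ℝ) ^ ((n:ℝ) * (R + s - 1)) / 4
        ≤ (M n : ℝ) * ((⌊(q:ℝ) ^ ((n:ℝ) * s)⌋₊ : ℕ) : ℝ) / ((q ^ n : ℕ) : ℝ) := by
    intro s hs0 hs1
    filter_upwards [(rpow_linear_atTop hq hR0).eventually_ge_atTop 2,
      (rpow_linear_atTop hq hs0).eventually_ge_atTop 2] with n h2R h2s
    have hNn : (0:ℝ) < ((q ^ n : ℕ) : ℝ) := by exact_mod_cast hNpos n
    have hM2 : (q:ℝ) ^ ((n:ℝ) * R) / 2 ≤ (M n : ℝ) := by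
      rw [hM n]
      have := Nat.sub_one_lt_floor ((q:ℝ) ^ ((n:ℝ) * R))
      linarith
    have hk2' : (q:ℝ) ^ ((n:ℝ) * s) / 2 ≤ ((⌊(q:ℝ) ^ ((n:ℝ) * s)⌋₊ : ℕ) : ℝ) := by
      have := Nat.sub_one_lt_floor ((q:ℝ) ^ ((n:ℝ) * s))
      linarith
    have hNid : (q:ℝ) ^ ((n:ℝ) * R) * (q:ℝ) ^ ((n:ℝ) * s)
        = ((q ^ n : ℕ) : ℝ) * (q:ℝ) ^ ((n:ℝ) * (R + s - 1)) := by
      rw [← Real.rpow_add hq0, hNr n, ← Real.rpow_add hq0]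
      congr 1
      ring
    rw [div_le_div_iff₀ (by norm_num) hNn]
    have hmul : ((q:ℝ) ^ ((n:ℝ) * R) / 2) * ((q:ℝ) ^ ((n:ℝ) * s) / 2)
        ≤ (M n : ℝ) * ((⌊(q:ℝ) ^ ((n:ℝ) * s)⌋₊ : ℕ) : ℝ) := by
      apply mul_le_mul hM2 hk2' (by positivity) (le_trans (by positivity) hM2)
    nlinarith [hmul, hNid]
  -- ===================== PART 2, lower bound =====================
  have hinfle : (⨅ x ∈ Set.Iio β ∩ Set.Icc (0:ℝ) 1, IN x) ≤ IN β := by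
    have hne : (𝓝[Set.Ioo 0 β] β).NeBot := right_nhdsWithin_Ioo_neBot hβ0
    have hsub : Set.Ioo 0 β ⊆ {x : ℝ | x ∈ Set.Icc (0:ℝ) 1 ∧ IN x ≠ ⊤} := by
      intro x hx
      exact ⟨⟨hx.1.le, (hx.2.trans hβ1).le⟩, hfin x ⟨hx.1.le, (hx.2.trans hβH).le⟩⟩
    have ht : Tendsto IN (𝓝[Set.Ioo 0 β] β) (𝓝 (IN β)) :=
      hcontβ.mono_left (nhdsWithin_mono β hsub)
    apply ge_of_tendsto ht
    filter_upwards [eventually_mem_nhdsWithin] with x hx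
    exact iInf₂_le x ⟨hx.2, ⟨hx.1.le, (hx.2.trans hβ1).le⟩⟩
  have hliminf2 : ((-Aβ : ℝ) : EReal) ≤
      liminf (rateSeq q (fun n => μ {ω | (n : ℝ)⁻¹ * Real.logb q ((G n ω : ℝ)) ∈ Set.Iio β}))
        atTop := by
    refine le_trans ?_ (hLDlow (Set.Iio β) isOpen_Iio)
    rw [EReal.coe_neg, ← hAβ]
    exact EReal.neg_le_neg_iff.mpr hinfle
  have ev_sub2 : ∀ᶠ n : ℕ in atTop,
      (μ {ω | (n : ℝ)⁻¹ * Real.logb q ((G n ω : ℝ)) ∈ Set.Iio β})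
        * (μ {ω | ∀ i, (⌊(q:ℝ) ^ ((n:ℝ) * β)⌋₊ - 1) < Un n i ω}) ≤ μ {ω | G n ω ≤ U n ω} := by
    filter_upwards [eventually_ge_atTop 1] with n hn
    rw [show {ω | (n : ℝ)⁻¹ * Real.logb q ((G n ω : ℝ)) ∈ Set.Iio β}
        = {ω | G n ω ∈ {g : ℕ | (n : ℝ)⁻¹ * Real.logb q ((g : ℝ)) ∈ Set.Iio β}} from rfl,
      ← keyInter n _ (⌊(q:ℝ) ^ ((n:ℝ) * β)⌋₊ - 1)]
    apply measure_mono
    rintro ω ⟨hA, hB⟩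
    have hGle : G n ω ≤ ⌊(q:ℝ) ^ ((n:ℝ) * β)⌋₊ := T1 n hn β ω hA
    have hk21 : 1 ≤ ⌊(q:ℝ) ^ ((n:ℝ) * β)⌋₊ := hK1 β hβ0.le n
    have : Nonempty (Fin (M n)) := ⟨⟨0, hM1 n⟩⟩
    have hUge : ⌊(q:ℝ) ^ ((n:ℝ) * β)⌋₊ ≤ U n ω := by
      rw [hU n ω]
      apply le_ciInf
      intro i
      have := hB i
      omega
    show G n ω ≤ U n ω
    omega
  have ev_w2 : ∀ᶠ n : ℕ in atTop, ENNReal.ofReal (Real.exp (-2))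
      ≤ μ {ω | ∀ i, (⌊(q:ℝ) ^ ((n:ℝ) * β)⌋₊ - 1) < Un n i ω} := by
    filter_upwards [(rpow_linear_atTop hq hR0).eventually_ge_atTop 2] with n h2q
    rw [tailU n (⌊(q:ℝ) ^ ((n:ℝ) * β)⌋₊ - 1)]
    have hNn : 0 < q ^ n := hNpos n
    have hNnr : (0:ℝ) < ((q ^ n : ℕ) : ℝ) := by exact_mod_cast hNn
    have hcast : ((⌊(q:ℝ) ^ ((n:ℝ) * β)⌋₊ : ℕ) : ℝ) ≤ (q:ℝ) ^ ((n:ℝ) * β) :=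
      Nat.floor_le (by positivity)
    have hprod : (q:ℝ) ^ ((n:ℝ) * R) * (q:ℝ) ^ ((n:ℝ) * β) = ((q ^ n : ℕ) : ℝ) := by
      rw [← Real.rpow_add hq0, hNr n]
      congr 1
      simp only [hβdef]
      ring
    have h2k : 2 * (⌊(q:ℝ) ^ ((n:ℝ) * β)⌋₊ - 1) ≤ q ^ n := by
      have hc2 : (2:ℝ) * ((⌊(q:ℝ) ^ ((n:ℝ) * β)⌋₊ : ℕ) : ℝ) ≤ ((q ^ n : ℕ) : ℝ) := by
        calc (2:ℝ) * ((⌊(q:ℝ) ^ ((n:ℝ) * β)⌋₊ : ℕ) : ℝ)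
            ≤ (q:ℝ) ^ ((n:ℝ) * R) * (q:ℝ) ^ ((n:ℝ) * β) :=
              mul_le_mul h2q hcast (by positivity) (by positivity)
          _ = _ := hprod
      have h2k' : ((2 * ⌊(q:ℝ) ^ ((n:ℝ) * β)⌋₊ : ℕ) : ℝ) ≤ ((q ^ n : ℕ) : ℝ) := by
        push_cast at hc2 ⊢
        linarith
      have := (Nat.cast_le (α := ℝ)).mp h2k'
      omega
    refine le_trans ?_ (pow_tail_lower hNn h2k)
    apply ENNReal.ofReal_le_ofReal
    apply Real.exp_le_exp.mpr
    apply neg_le_neg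
    have hk1cast : ((⌊(q:ℝ) ^ ((n:ℝ) * β)⌋₊ - 1 : ℕ) : ℝ) ≤ ((⌊(q:ℝ) ^ ((n:ℝ) * β)⌋₊ : ℕ) : ℝ) := by
      exact_mod_cast Nat.sub_le _ _
    have hMK : (M n : ℝ) * ((⌊(q:ℝ) ^ ((n:ℝ) * β)⌋₊ - 1 : ℕ) : ℝ) ≤ ((q ^ n : ℕ) : ℝ) := by
      calc (M n : ℝ) * ((⌊(q:ℝ) ^ ((n:ℝ) * β)⌋₊ - 1 : ℕ) : ℝ)
          ≤ (q:ℝ) ^ ((n:ℝ) * R) * (q:ℝ) ^ ((n:ℝ) * β) :=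
            mul_le_mul (hMle n) (hk1cast.trans hcast) (by positivity) (by positivity)
        _ = _ := hprod
    rw [div_le_iff₀ hNnr]
    nlinarith [hMK]
  have part2lower : ((-Aβ : ℝ) : EReal) ≤
      liminf (rateSeq q (fun n => μ {ω | G n ω ≤ U n ω})) atTop :=
    liminf_rate_lower hq (Real.exp_pos _) ev_sub2 (fun n => prob_le_one) ev_w2 hliminf2
  -- ===================== PART 2, upper bound =====================
  have part2upper : limsup (rateSeq q (fun n => μ {ω | G n ω ≤ U n ω})) atTop
      ≤ ((-Aβ : ℝ) : EReal) := by
    have Hstep : ∀ t : ℝ, β < t → t < H →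
        limsup (rateSeq q (fun n => μ {ω | G n ω ≤ U n ω})) atTop ≤ -(IN t) := by
      intro t htβ htH
      have ht0 : 0 < t := hβ0.trans htβ
      have ht1 : t < 1 := htH.trans hH1
      have hINttop : IN t ≠ ⊤ := hfin t ⟨ht0.le, htH.le⟩
      have hINtbot : IN t ≠ ⊥ := by
        intro hb
        have := hINnn t ⟨ht0.le, ht1.le⟩
        rw [hb] at this
        exact absurd this (by simp)
      set At : ℝ := (IN t).toReal with hAtdef
      have hAt : IN t = ((At : ℝ) : EReal) := (EReal.coe_toReal hINttop hINtbot).symm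
      rw [hAt, ← EReal.coe_neg]
      apply limsup_rate_upper hq
        (v := fun n => μ {ω | (n : ℝ)⁻¹ * Real.logb q ((G n ω : ℝ)) ∈ Set.Iic t})
        (w := fun n => μ {ω | ∀ i, ⌊(q:ℝ) ^ ((n:ℝ) * t)⌋₊ < Un n i ω})
      · -- union bound
        filter_upwards [eventually_ge_atTop 1] with n hn
        refine le_trans (measure_mono ?_) (measure_union_le _ _)
        intro ω hω
        by_cases hc : (n : ℝ)⁻¹ * Real.logb q ((G n ω : ℝ)) ≤ t
        · exact Or.inl hc
        · push_neg at hc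
          refine Or.inr ?_
          intro i
          have hkG : ⌊(q:ℝ) ^ ((n:ℝ) * t)⌋₊ < G n ω := T2 n hn t ω hc
          have hUle : U n ω ≤ Un n i ω := by
            have : Nonempty (Fin (M n)) := ⟨⟨0, hM1 n⟩⟩
            rw [hU n ω]
            exact ciInf_le (OrderBot.bddBelow _) i
          have hGU : G n ω ≤ U n ω := hω
          omega
      · -- main term via the LDP upper bound
        refine le_trans (hLDup (Set.Iic t) isClosed_Iic) ?_
        rw [EReal.coe_neg, ← hAt]
        apply EReal.neg_le_neg_iff.mpr
        apply le_iInf₂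
        intro x hx
        exact hmono x t hx.2.1 hx.1 htH.le
      · -- superexponential term
        apply limsup_rate_bot hq
          (e := fun n => (M n : ℝ) * ((⌊(q:ℝ) ^ ((n:ℝ) * t)⌋₊ : ℕ) : ℝ) / ((q ^ n : ℕ) : ℝ))
        · apply Eventually.of_forall
          intro n
          rw [tailU n ⌊(q:ℝ) ^ ((n:ℝ) * t)⌋₊]
          exact pow_tail_upper (hNpos n) (hKle t ht1.le n)
        · have hδ0 : 0 < R + t - 1 := by simp only [hβdef] at htβ; linarith
          have hcomp : ∀ᶠ n : ℕ in atTop,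
              ((q:ℝ) ^ ((n:ℝ) * (R + t - 1)) / 4) / ((n:ℝ) * Real.log q)
                ≤ ((M n : ℝ) * ((⌊(q:ℝ) ^ ((n:ℝ) * t)⌋₊ : ℕ) : ℝ) / ((q ^ n : ℕ) : ℝ))
                    / ((n:ℝ) * Real.log q) := by
            filter_upwards [hMKbig t ht0 ht1.le, eventually_ge_atTop 1] with n hnum hn
            have hn0 : (0:ℝ) < n := by exact_mod_cast hn
            exact div_le_div_of_nonneg_right hnum (by positivity)
          exact tendsto_atTop_mono' atTop hcomp (exp_div_linear_atTop hq hδ0)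
    -- conclude by continuity from the right at β
    have hne : (𝓝[Set.Ioo β H] β).NeBot := left_nhdsWithin_Ioo_neBot hβH
    have hsub : Set.Ioo β H ⊆ {x : ℝ | x ∈ Set.Icc (0:ℝ) 1 ∧ IN x ≠ ⊤} := by
      intro x hx
      exact ⟨⟨(hβ0.trans hx.1).le, (hx.2.trans hH1).le⟩, hfin x ⟨(hβ0.trans hx.1).le, hx.2.le⟩⟩
    have ht : Tendsto (fun x => -(IN x)) (𝓝[Set.Ioo β H] β) (𝓝 (-(IN β))) :=
      (continuous_neg.tendsto _).comp (hcontβ.mono_left (nhdsWithin_mono β hsub))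
    rw [EReal.coe_neg, ← hAβ]
    apply ge_of_tendsto ht
    filter_upwards [eventually_mem_nhdsWithin] with x hx
    exact Hstep x hx.1 hx.2
  have part2 : Tendsto (rateSeq q (fun n => μ {ω | G n ω ≤ U n ω})) atTop (𝓝 (-(IN (1 - R)))) := by
    rw [show (1 - R : ℝ) = β from rfl, hAβ, ← EReal.coe_neg]
    exact tendsto_of_le_liminf_of_limsup_le part2lower part2upper
  -- ===================== PART 1 =====================
  set a : ℝ := (β + H)/2 with hadef
  have hβa : β < a := by simp only [hadef]; linarith
  have haH : a < H := by simp only [hadef]; linarith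
  have ha0 : 0 < a := hβ0.trans hβa
  have ha1 : a < 1 := haH.trans hH1
  have hliminf1 : ((0:ℝ) : EReal) ≤
      liminf (rateSeq q (fun n => μ {ω | (n : ℝ)⁻¹ * Real.logb q ((G n ω : ℝ)) ∈ Set.Ioi a}))
        atTop := by
    refine le_trans ?_ (hLDlow (Set.Ioi a) isOpen_Ioi)
    have h1 : (⨅ x ∈ Set.Ioi a ∩ Set.Icc (0:ℝ) 1, IN x) ≤ 0 := by
      refine le_trans (iInf₂_le H ⟨haH, ⟨hH0.le, hH1.le⟩⟩) ?_
      rw [hINH]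
    rw [EReal.coe_zero, ← neg_zero]
    exact EReal.neg_le_neg_iff.mpr h1
  have ev_sub1 : ∀ᶠ n : ℕ in atTop,
      μ {ω | (n : ℝ)⁻¹ * Real.logb q ((G n ω : ℝ)) ∈ Set.Ioi a}
        * μ {ω | ¬ ∀ i, ⌊(q:ℝ) ^ ((n:ℝ) * a)⌋₊ < Un n i ω} ≤ μ {ω | U n ω ≤ G n ω} := by
    filter_upwards [eventually_ge_atTop 1] with n hn
    rw [show {ω | (n : ℝ)⁻¹ * Real.logb q ((G n ω : ℝ)) ∈ Set.Ioi a}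
        = {ω | G n ω ∈ {g : ℕ | (n : ℝ)⁻¹ * Real.logb q ((g : ℝ)) ∈ Set.Ioi a}} from rfl,
      ← keyInterC n _ ⌊(q:ℝ) ^ ((n:ℝ) * a)⌋₊]
    apply measure_mono
    rintro ω ⟨hA, hB⟩
    push_neg at hB
    obtain ⟨i, hi⟩ := hB
    have hUle : U n ω ≤ ⌊(q:ℝ) ^ ((n:ℝ) * a)⌋₊ := by
      have : Nonempty (Fin (M n)) := ⟨⟨0, hM1 n⟩⟩
      rw [hU n ω]
      exact le_trans (ciInf_le (OrderBot.bddBelow _) i) hi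
    have hGgt : ⌊(q:ℝ) ^ ((n:ℝ) * a)⌋₊ < G n ω := T2 n hn a ω hA
    show U n ω ≤ G n ω
    omega
  have ev_w1 : ∀ᶠ n : ℕ in atTop, ENNReal.ofReal (1/2)
      ≤ μ {ω | ¬ ∀ i, ⌊(q:ℝ) ^ ((n:ℝ) * a)⌋₊ < Un n i ω} := by
    have hδ0 : 0 < R + a - 1 := by simp only [hβdef] at hβa; linarith
    have hlog2 : ∀ᶠ n : ℕ in atTop,
        Real.log 2 ≤ (q:ℝ) ^ ((n:ℝ) * (R + a - 1)) / 4 := by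
      apply ((rpow_linear_atTop hq hδ0).atTop_div_const (by norm_num : (0:ℝ) < 4)).eventually_ge_atTop
    filter_upwards [hMKbig a ha0 ha1.le, hlog2] with n hnum hl2
    have htail : μ {ω | ∀ i, ⌊(q:ℝ) ^ ((n:ℝ) * a)⌋₊ < Un n i ω} ≤ ENNReal.ofReal (1/2) := by
      rw [tailU n ⌊(q:ℝ) ^ ((n:ℝ) * a)⌋₊]
      refine le_trans (pow_tail_upper (hNpos n) (hKle a ha1.le n)) ?_
      apply ENNReal.ofReal_le_ofReal
      have hexp : Real.exp (-((M n : ℝ) * ((⌊(q:ℝ) ^ ((n:ℝ) * a)⌋₊ : ℕ) : ℝ) / ((q ^ n : ℕ) : ℝ)))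
          ≤ Real.exp (-(Real.log 2)) := by
        apply Real.exp_le_exp.mpr
        apply neg_le_neg
        exact hl2.trans hnum
      refine hexp.trans ?_
      rw [Real.exp_neg, Real.exp_log (by norm_num : (0:ℝ) < 2)]
      norm_num
    have hcompl : {ω | ¬ ∀ i, ⌊(q:ℝ) ^ ((n:ℝ) * a)⌋₊ < Un n i ω}
        = {ω | ∀ i, ⌊(q:ℝ) ^ ((n:ℝ) * a)⌋₊ < Un n i ω}ᶜ := rfl
    rw [hcompl, measure_compl (hTailMeas n _) (measure_ne_top μ _), measure_univ]
    calc ENNReal.ofReal (1/2) = 1 - ENNReal.ofReal (1/2) := by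
          rw [← ENNReal.ofReal_one, ← ENNReal.ofReal_sub _ (by norm_num : (0:ℝ) ≤ 1/2)]
          norm_num
      _ ≤ 1 - μ {ω | ∀ i, ⌊(q:ℝ) ^ ((n:ℝ) * a)⌋₊ < Un n i ω} := tsub_le_tsub_left htail 1
  have part1lower : ((0:ℝ) : EReal) ≤
      liminf (rateSeq q (fun n => μ {ω | U n ω ≤ G n ω})) atTop :=
    liminf_rate_lower hq (by norm_num : (0:ℝ) < 1/2) ev_sub1 (fun n => prob_le_one) ev_w1 hliminf1
  have part1upper : limsup (rateSeq q (fun n => μ {ω | U n ω ≤ G n ω})) atTop ≤ (0 : EReal) := by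
    apply limsup_le_of_le (by isBoundedDefault)
    apply Eventually.of_forall
    intro n
    have hc : (0:ℝ) ≤ ((n:ℝ) * Real.log q)⁻¹ := by positivity
    have hlog : ENNReal.log (μ {ω | U n ω ≤ G n ω}) ≤ 0 :=
      ENNReal.log_le_zero_iff.mpr prob_le_one
    calc rateSeq q (fun n => μ {ω | U n ω ≤ G n ω}) n
        ≤ ((((n:ℝ) * Real.log q)⁻¹ : ℝ) : EReal) * 0 :=
          mul_le_mul_of_nonneg_left hlog (by exact_mod_cast hc)
      _ = 0 := mul_zero _
  have part1 : Tendsto (rateSeq q (fun n => μ {ω | U n ω ≤ G n ω})) atTop (𝓝 (0 : EReal)) := by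
    refine tendsto_of_le_liminf_of_limsup_le ?_ part1upper
    exact_mod_cast part1lower
  exact ⟨part1, part2, part3⟩
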